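/- An r-uniform family of finite sets containing no k disjointly representable sets has size at most C(r+k-1, k-1). -/

import Mathlib

open Finset

/-- A family `A₁,…,A_k` is disjointly representable if there are elements
`x₁,…,x_k` with `x_i ∈ A_j` iff `i = j`. -/
def DisjRep {α : Type*} {k : ℕ} (A : Fin k → Finset α) : Prop :=
  ∃ x : Fin k → α, ∀ i j, x i ∈ A j ↔ i = j

private lemma pow_add_le_aux (a d : ℕ) :
    ∀ n : ℕ, (a + d) ^ (n+1) ≤ a ^ (n+1) + (n+1) * d * (a + d) ^ n := by
  intro n
  induction n with
  | zero => simp [pow_succ]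
  | succ n ih =>
    have h4 : a^(n+1) ≤ (a+d)^(n+1) := Nat.pow_le_pow_left (Nat.le_add_right a d) _
    have h5 : a^(n+1)*d ≤ (a+d)^(n+1)*d := Nat.mul_le_mul_right d h4
    calc (a+d)^(n+1+1) = (a+d)^(n+1) * (a+d) := by ring
    _ ≤ (a^(n+1) + (n+1)*d*(a+d)^n) * (a+d) := Nat.mul_le_mul_right _ ih
    _ = a^(n+1+1) + a^(n+1)*d + (n+1)*d*(a+d)^(n+1) := by ring
    _ ≤ a^(n+1+1) + (a+d)^(n+1)*d + (n+1)*d*(a+d)^(n+1) :=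
        Nat.add_le_add_right (Nat.add_le_add_left h5 _) _
    _ = a^(n+1+1) + (n+1+1)*d*(a+d)^(n+1) := by ring

private lemma arith_key (K d M : ℕ) :
    ∀ n : ℕ, (K+1)*n*d < M → K * M ^ n < (K+1) * (M - d) ^ n := by
  intro n
  cases n with
  | zero => intro _; simp
  | succ n =>
    intro hM
    have hM0 : 0 < M := lt_of_le_of_lt (Nat.zero_le _) hM
    have hdM : d ≤ M := by
      have h1 : d ≤ (K+1)*(n+1)*d := Nat.le_mul_of_pos_left d (by positivity)
      omega
    have hsub : (M - d) + d = M := Nat.sub_add_cancel hdM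
    have key := pow_add_le_aux (M - d) d n
    rw [hsub] at key
    by_contra hc
    push_neg at hc
    have h2 : (K+1) * M^(n+1) ≤ (K+1)*(M-d)^(n+1) + (K+1)*((n+1)*d*M^n) := by
      calc (K+1)*M^(n+1) ≤ (K+1)*((M-d)^(n+1) + (n+1)*d*M^n) := Nat.mul_le_mul_left _ key
      _ = (K+1)*(M-d)^(n+1) + (K+1)*((n+1)*d*M^n) := by ring
    have hsplit : (K+1)*M^(n+1) = K*M^(n+1) + M^(n+1) := by ring
    have h3 : M^(n+1) ≤ (K+1)*((n+1)*d*M^n) := by omega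
    have h4 : M * M^n ≤ ((K+1)*(n+1)*d) * M^n := by
      calc M * M^n = M^(n+1) := by ring
      _ ≤ (K+1)*((n+1)*d*M^n) := h3
      _ = ((K+1)*(n+1)*d)*M^n := by ring
    have h5 : M ≤ (K+1)*(n+1)*d :=
      Nat.le_of_mul_le_mul_right h4 (Nat.pow_pos hM0)
    omega

private lemma bollobas {β : Type*} [Fintype β] [DecidableEq β] (r s : ℕ)
    (I : Finset (Finset β)) (t : Finset β → Finset β)
    (hA : ∀ A ∈ I, A.card = r)
    (hB : ∀ A ∈ I, (t A).card ≤ s)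
    (hd : ∀ A ∈ I, ∀ x ∈ A, x ∉ t A)
    (hcross : ∀ A ∈ I, ∀ B ∈ I, A ≠ B → ∃ x, x ∈ A ∧ x ∈ t B) :
    I.card ≤ (r + s).choose s := by
  classical
  set K := (r + s).choose s with hK
  set n := Fintype.card β with hn
  set M := (K+1)*n*(r+s) + (r+s) + 1 with hMdef
  have hM0 : 0 < M := by omega
  set good : Finset β → Finset (β → Fin M) :=
    (fun A => univ.filter (fun σ => ∀ x ∈ A, ∀ y ∈ t A, σ x < σ y)) with hgood
  -- Step A: lower bound for each good event
  have stepA : ∀ A ∈ I, (M - (r+s))^n ≤ K * (good A).card := by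
    intro A hAI
    set b := (t A).card with hb
    have hbs : b ≤ s := hB A hAI
    have hAr : A.card = r := hA A hAI
    have hdisj : Disjoint A (t A) := Finset.disjoint_left.mpr (hd A hAI)
    have hcu : (A ∪ t A).card = r + b := by
      rw [Finset.card_union_of_disjoint hdisj, hAr]
    have hcn : r + b ≤ n := by
      rw [← hcu, hn, ← Finset.card_univ]
      exact Finset.card_le_univ _
    set R := (A ∪ t A)ᶜ with hR
    have hRmem : ∀ x, x ∉ A → x ∉ t A → x ∈ R := by
      intro x h1 h2
      simp [hR, Finset.mem_compl, Finset.mem_union, h1, h2]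
    have hRcard : R.card = n - (r+b) := by
      rw [hR, Finset.card_compl, hcu, hn]
    set Θ : Finset (Fin M) × ({x // x ∈ A} ≃ Fin r) × ({x // x ∈ t A} ≃ Fin b) ×
        ({x // x ∈ R} → Fin M) → (β → Fin M) :=
      (fun q x =>
        if hP : q.1.card = r + b then
          if hx : x ∈ A then
            q.1.orderEmbOfFin hP ⟨(q.2.1 ⟨x, hx⟩ : Fin r).1,
              lt_of_lt_of_le (Fin.is_lt _) (Nat.le_add_right r b)⟩
          else if hx2 : x ∈ t A then
            q.1.orderEmbOfFin hP ⟨r + (q.2.2.1 ⟨x, hx2⟩ : Fin b).1,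
              Nat.add_lt_add_left (Fin.is_lt _) r⟩
          else q.2.2.2 ⟨x, hRmem x hx hx2⟩
        else ⟨0, hM0⟩) with hΘ
    set D : Finset (Finset (Fin M) × ({x // x ∈ A} ≃ Fin r) × ({x // x ∈ t A} ≃ Fin b) ×
        ({x // x ∈ R} → Fin M)) :=
      (univ.powersetCard (r+b)) ×ˢ univ ×ˢ univ ×ˢ univ with hD
    have hmaps : ∀ q ∈ D, Θ q ∈ good A := by
      rintro ⟨P, e1, e2, f⟩ hq
      simp only [hD, Finset.mem_product, Finset.mem_powersetCard] at hq
      have hP : P.card = r + b := hq.1.2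
      simp only [hgood, Finset.mem_filter, Finset.mem_univ, true_and]
      intro x hx y hy
      have hynA : y ∉ A := fun h => hd A hAI y h hy
      simp only [hΘ, dif_pos hP, dif_pos hx, dif_neg hynA, dif_pos hy]
      exact (P.orderEmbOfFin hP).strictMono (by
        simp only [Fin.mk_lt_mk]
        exact lt_of_lt_of_le (Fin.is_lt _) (Nat.le_add_right r _))
    have hinj : Set.InjOn Θ D := by
      rintro ⟨P, e1, e2, f⟩ hq ⟨P', e1', e2', f'⟩ hq' heq
      simp only [hD, Finset.mem_coe, Finset.mem_product, Finset.mem_powersetCard] at hq hq'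
      have hP : P.card = r + b := hq.1.2
      have hP' : P'.card = r + b := hq'.1.2
      -- values of Θ on A and on t A
      have evA : ∀ (z : {x // x ∈ A}), Θ (P, e1, e2, f) z.1 =
          P.orderEmbOfFin hP ⟨(e1 z).1,
            lt_of_lt_of_le (Fin.is_lt _) (Nat.le_add_right r b)⟩ := by
        intro z
        simp only [hΘ, dif_pos hP, dif_pos z.2]
      have evA' : ∀ (z : {x // x ∈ A}), Θ (P', e1', e2', f') z.1 =
          P'.orderEmbOfFin hP' ⟨(e1' z).1,
            lt_of_lt_of_le (Fin.is_lt _) (Nat.le_add_right r b)⟩ := by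
        intro z
        simp only [hΘ, dif_pos hP', dif_pos z.2]
      have evT : ∀ (z : {x // x ∈ t A}), Θ (P, e1, e2, f) z.1 =
          P.orderEmbOfFin hP ⟨r + (e2 z).1, Nat.add_lt_add_left (Fin.is_lt _) r⟩ := by
        intro z
        have hz : z.1 ∉ A := fun h => hd A hAI z.1 h z.2
        simp only [hΘ, dif_pos hP, dif_neg hz, dif_pos z.2]
      have evT' : ∀ (z : {x // x ∈ t A}), Θ (P', e1', e2', f') z.1 =
          P'.orderEmbOfFin hP' ⟨r + (e2' z).1, Nat.add_lt_add_left (Fin.is_lt _) r⟩ := by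
        intro z
        have hz : z.1 ∉ A := fun h => hd A hAI z.1 h z.2
        simp only [hΘ, dif_pos hP', dif_neg hz, dif_pos z.2]
      have evR : ∀ (z : {x // x ∈ R}), Θ (P, e1, e2, f) z.1 = f z := by
        intro z
        have h1 : z.1 ∉ A := by
          have := z.2; simp only [hR, Finset.mem_compl, Finset.mem_union] at this; tauto
        have h2 : z.1 ∉ t A := by
          have := z.2; simp only [hR, Finset.mem_compl, Finset.mem_union] at this; tauto
        simp only [hΘ, dif_pos hP, dif_neg h1, dif_neg h2]
      have evR' : ∀ (z : {x // x ∈ R}), Θ (P', e1', e2', f') z.1 = f' z := by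
        intro z
        have h1 : z.1 ∉ A := by
          have := z.2; simp only [hR, Finset.mem_compl, Finset.mem_union] at this; tauto
        have h2 : z.1 ∉ t A := by
          have := z.2; simp only [hR, Finset.mem_compl, Finset.mem_union] at this; tauto
        simp only [hΘ, dif_pos hP', dif_neg h1, dif_neg h2]
      -- P = P'
      have hPP' : P = P' := by
        apply Finset.eq_of_subset_of_card_le _ (le_of_eq (by rw [hP, hP']))
        intro v hv
        have : v ∈ Set.range (P.orderEmbOfFin hP) := by
          rw [Finset.range_orderEmbOfFin]; exact hv
        obtain ⟨i, hi⟩ := this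
        by_cases hir : (i : ℕ) < r
        · set z := e1.symm ⟨(i : ℕ), hir⟩ with hz
          have h2 : e1 z = ⟨(i : ℕ), hir⟩ := e1.apply_symm_apply _
          have hLv : Θ (P, e1, e2, f) z.1 = v := by
            rw [evA z, h2, ← hi]
          have h1 : v = Θ (P', e1', e2', f') z.1 := by
            rw [← hLv]; exact congrFun heq z.1
          rw [evA' z] at h1
          rw [h1]; exact Finset.orderEmbOfFin_mem _ _ _
        · have hib : (i : ℕ) - r < b := by
            have := i.is_lt; omega
          set z := e2.symm ⟨(i : ℕ) - r, hib⟩ with hz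
          have h2 : e2 z = ⟨(i : ℕ) - r, hib⟩ := e2.apply_symm_apply _
          have hLv : Θ (P, e1, e2, f) z.1 = v := by
            rw [evT z, h2, ← hi]
            exact congrArg _ (Fin.ext (by simp; omega))
          have h1 : v = Θ (P', e1', e2', f') z.1 := by
            rw [← hLv]; exact congrFun heq z.1
          rw [evT' z] at h1
          rw [h1]; exact Finset.orderEmbOfFin_mem _ _ _
      subst hPP'
      -- e1 = e1'
      have he1 : e1 = e1' := by
        apply Equiv.ext
        intro z
        have h1 := congrFun heq z.1
        rw [evA z, evA' z] at h1
        have h2 := (P.orderEmbOfFin hP).injective h1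
        simp only [Fin.mk.injEq] at h2
        exact Fin.ext h2
      have he2 : e2 = e2' := by
        apply Equiv.ext
        intro z
        have h1 := congrFun heq z.1
        rw [evT z, evT' z] at h1
        have h2 := (P.orderEmbOfFin hP).injective h1
        simp only [Fin.mk.injEq] at h2
        exact Fin.ext (by omega)
      have hf : f = f' := by
        funext z
        have h1 := congrFun heq z.1
        rw [evR z, evR' z] at h1
        exact h1
      rw [he1, he2, hf]
    have hDle : D.card ≤ (good A).card :=
      Finset.card_le_card_of_injOn Θ hmaps hinj
    have hDcard : D.card = M.choose (r+b) * (Nat.factorial r * (Nat.factorial b * M ^ (n - (r+b)))) := by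
      have c1 : (univ.powersetCard (r+b) : Finset (Finset (Fin M))).card = M.choose (r+b) := by
        rw [Finset.card_powersetCard, Finset.card_univ, Fintype.card_fin]
      have c2 : (univ : Finset ({x // x ∈ A} ≃ Fin r)).card = Nat.factorial r := by
        rw [Finset.card_univ,
          Fintype.card_equiv (Fintype.equivFinOfCardEq (by rw [Fintype.card_coe, hAr])),
          Fintype.card_coe, hAr]
      have c3 : (univ : Finset ({x // x ∈ t A} ≃ Fin b)).card = Nat.factorial b := by
        rw [Finset.card_univ,
          Fintype.card_equiv (Fintype.equivFinOfCardEq (by rw [Fintype.card_coe])),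
          Fintype.card_coe]
      have c4 : (univ : Finset ({x // x ∈ R} → Fin M)).card = M ^ (n - (r+b)) := by
        rw [Finset.card_univ, Fintype.card_fun, Fintype.card_fin, Fintype.card_coe, hRcard]
      rw [hD, Finset.card_product, Finset.card_product, Finset.card_product, c1, c2, c3, c4]
    -- the chain of inequalities
    have hch1 : (M - (r+s))^n = (M - (r+s))^(r+b) * (M - (r+s))^(n - (r+b)) := by
      rw [← pow_add]; congr 1; omega
    have hch2 : (M - (r+s))^(r+b) ≤ (M + 1 - (r+b))^(r+b) :=
      Nat.pow_le_pow_left (by omega) _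
    have hch3 : (M + 1 - (r+b))^(r+b) ≤ M.descFactorial (r+b) :=
      Nat.pow_sub_le_descFactorial M (r+b)
    have hch4 : (M - (r+s))^(n - (r+b)) ≤ M ^ (n - (r+b)) :=
      Nat.pow_le_pow_left (Nat.sub_le _ _) _
    have hdesc : M.descFactorial (r+b) = Nat.factorial (r+b) * M.choose (r+b) :=
      Nat.descFactorial_eq_factorial_mul_choose M (r+b)
    have hfact : (r+b).choose b * Nat.factorial r * Nat.factorial b = Nat.factorial (r+b) :=
      Nat.add_choose_mul_factorial_mul_factorial r b
    have hKb : (r+b).choose b ≤ K := by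
      rw [hK]
      calc (r+b).choose b = (r+b).choose r := by rw [Nat.choose_symm_add]
      _ ≤ (r+s).choose r := Nat.choose_le_choose r (by omega)
      _ = (r+s).choose s := by rw [Nat.choose_symm_add]
    calc (M - (r+s))^n = (M - (r+s))^(r+b) * (M - (r+s))^(n - (r+b)) := hch1
    _ ≤ M.descFactorial (r+b) * M ^ (n - (r+b)) :=
        Nat.mul_le_mul (hch2.trans hch3) hch4
    _ = (r+b).choose b * (M.choose (r+b) * (Nat.factorial r * (Nat.factorial b * M ^ (n - (r+b))))) := by
        rw [hdesc, ← hfact]; ring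
    _ = (r+b).choose b * D.card := by rw [hDcard]
    _ ≤ K * (good A).card := Nat.mul_le_mul hKb hDle
  -- Step B: the good events are pairwise disjoint
  have stepB : ∀ A ∈ I, ∀ B ∈ I, A ≠ B → Disjoint (good A) (good B) := by
    intro A hAI B hBI hAB
    rw [Finset.disjoint_left]
    intro σ hσA hσB
    simp only [hgood, Finset.mem_filter] at hσA hσB
    obtain ⟨x, hxA, hxtB⟩ := hcross A hAI B hBI hAB
    obtain ⟨y, hyB, hytA⟩ := hcross B hBI A hAI (Ne.symm hAB)
    exact absurd (hσB.2 y hyB x hxtB) (not_lt.mpr (hσA.2 x hxA y hytA).le)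
  -- Step C: put everything together
  have hsum : ∑ A ∈ I, (good A).card ≤ M ^ n := by
    rw [← Finset.card_biUnion stepB]
    calc (I.biUnion good).card ≤ (univ : Finset (β → Fin M)).card := Finset.card_le_univ _
    _ = M ^ n := by rw [Finset.card_univ, Fintype.card_fun, Fintype.card_fin, hn]
  have hmain : I.card * (M - (r+s))^n ≤ K * M ^ n := by
    calc I.card * (M - (r+s))^n = ∑ _A ∈ I, (M - (r+s))^n := by
          rw [Finset.sum_const, smul_eq_mul]
    _ ≤ ∑ A ∈ I, K * (good A).card := Finset.sum_le_sum stepA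
    _ = K * ∑ A ∈ I, (good A).card := by rw [Finset.mul_sum]
    _ ≤ K * M ^ n := Nat.mul_le_mul_left K hsum
  by_contra hcon
  push_neg at hcon
  have hge : K + 1 ≤ I.card := hcon
  have harith := arith_key K (r+s) M n (by omega)
  have : (K+1) * (M - (r+s))^n ≤ K * M^n :=
    le_trans (Nat.mul_le_mul_right _ hge) hmain
  omega

theorem stmt_2 {α : Type*} [DecidableEq α] (r k : ℕ)
    (F : Finset (Finset α)) (hcard : ∀ A ∈ F, A.card = r)
    (hnoDR : ¬ ∃ g : Fin k → Finset α,
      Function.Injective g ∧ (∀ i, g i ∈ F) ∧ DisjRep g) :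
    F.card ≤ Nat.choose (r + k - 1) (k - 1) := by
  classical
  rcases Nat.eq_zero_or_pos k with hk0 | hk
  · subst hk0
    exact absurd ⟨fun i => i.elim0, fun i => i.elim0, fun i => i.elim0,
      fun i => i.elim0, fun i => i.elim0⟩ hnoDR
  -- Step 1: transversals
  have hS : ∀ A ∈ F, ∃ S : Finset α, S ⊆ (F.sup id) \ A ∧ S.card ≤ k - 1 ∧
      ∀ B ∈ F, B ≠ A → (B ∩ S).Nonempty := by
    intro A hAF
    have hBU : ∀ B ∈ F, B ⊆ F.sup id := fun B hB => Finset.le_sup (f := id) hB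
    set 𝒮 := ((F.sup id \ A).powerset).filter
      (fun S => ∀ B ∈ F, B ≠ A → (B ∩ S).Nonempty) with h𝒮
    have hne : F.sup id \ A ∈ 𝒮 := by
      simp only [h𝒮, Finset.mem_filter, Finset.mem_powerset, Finset.Subset.refl, true_and]
      intro B hB hBA
      have hnsub : ¬ B ⊆ A := by
        intro hsub
        exact hBA (Finset.eq_of_subset_of_card_le hsub
          (by rw [hcard A hAF, hcard B hB]))
      obtain ⟨x, hxB, hxA⟩ := Finset.not_subset.mp hnsub
      exact ⟨x, Finset.mem_inter.mpr ⟨hxB, Finset.mem_sdiff.mpr ⟨hBU B hB hxB, hxA⟩⟩⟩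
    obtain ⟨S, hSmem, hSmin⟩ := Finset.exists_min_image 𝒮 Finset.card ⟨_, hne⟩
    simp only [h𝒮, Finset.mem_filter, Finset.mem_powerset] at hSmem
    obtain ⟨hSsub, hTr⟩ := hSmem
    refine ⟨S, hSsub, ?_, hTr⟩
    by_contra hbig
    push_neg at hbig
    have hkS : k ≤ S.card := by omega
    -- minimality gives singleton witnesses
    have hwit : ∀ x ∈ S, ∃ B ∈ F, B ≠ A ∧ B ∩ S = {x} := by
      intro x hx
      have hno : S.erase x ∉ 𝒮 := by
        intro hmem
        have := hSmin _ hmem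
        have := Finset.card_erase_of_mem hx
        have : 0 < S.card := Finset.card_pos.mpr ⟨x, hx⟩
        omega
      simp only [h𝒮, Finset.mem_filter, Finset.mem_powerset] at hno
      push_neg at hno
      obtain ⟨B, hBF, hBA, hBe⟩ := hno ((Finset.erase_subset _ _).trans hSsub)
      have hBe' : B ∩ S.erase x = ∅ := hBe
      refine ⟨B, hBF, hBA, ?_⟩
      have hsub1 : B ∩ S ⊆ {x} := by
        intro y hy
        rw [Finset.mem_inter] at hy
        rw [Finset.mem_singleton]
        by_contra hyx
        have : y ∈ B ∩ S.erase x :=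
          Finset.mem_inter.mpr ⟨hy.1, Finset.mem_erase.mpr ⟨hyx, hy.2⟩⟩
        rw [hBe'] at this
        exact absurd this (Finset.notMem_empty y)
      obtain ⟨y, hy⟩ := hTr B hBF hBA
      have hyx : y = x := Finset.mem_singleton.mp (hsub1 hy)
      apply Finset.Subset.antisymm hsub1
      intro z hz
      rw [Finset.mem_singleton] at hz
      subst hz; subst hyx; exact hy
    -- extract k disjointly representable sets
    obtain ⟨S', hS'sub, hS'card⟩ := Finset.exists_subset_card_eq hkS
    set ev : Fin k → {x // x ∈ S'} := fun i => S'.equivFin.symm (Fin.cast hS'card.symm i)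
      with hev
    have hxiS : ∀ i, (ev i).1 ∈ S := fun i => hS'sub (ev i).2
    have hevinj : Function.Injective (fun i => (ev i).1) := by
      intro i j hij
      have h1 : ev i = ev j := Subtype.ext hij
      have h2 := S'.equivFin.symm.injective h1
      exact Fin.cast_injective _ h2
    choose Bf hBf1 hBf2 hBf3 using hwit
    set g : Fin k → Finset α := fun i => Bf (ev i).1 (hxiS i) with hg
    have hkey : ∀ i j, (ev i).1 ∈ g j ↔ i = j := by
      intro i j
      constructor
      · intro hmem
        have h1 : (ev i).1 ∈ g j ∩ S := Finset.mem_inter.mpr ⟨hmem, hxiS i⟩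
        rw [hg] at h1
        rw [hBf3 (ev j).1 (hxiS j)] at h1
        exact hevinj (Finset.mem_singleton.mp h1)
      · rintro rfl
        have : (ev i).1 ∈ {(ev i).1} := Finset.mem_singleton_self _
        rw [← hBf3 (ev i).1 (hxiS i)] at this
        exact (Finset.mem_inter.mp this).1
    have hginj : Function.Injective g := by
      intro i j hij
      have h1 : (ev i).1 ∈ g i := (hkey i i).mpr rfl
      rw [hij] at h1
      exact (hkey i j).mp h1
    exact hnoDR ⟨g, hginj, fun i => hBf1 (ev i).1 (hxiS i), fun i => (ev i).1, hkey⟩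
  choose! Sf hSf1 hSf2 hSf3 using hS
  -- Step 2: move to the subtype of the ground finset and apply Bollobás
  set X := F.sup id with hX
  have hBX : ∀ B ∈ F, B ⊆ X := fun B hB => Finset.le_sup (f := id) hB
  set lift : Finset α → Finset {x // x ∈ X} := fun A => A.subtype (· ∈ X) with hlift
  have hliftmap : ∀ A : Finset α, A ⊆ X → (lift A).map (Function.Embedding.subtype _) = A := by
    intro A hAX
    rw [hlift]
    exact Finset.subtype_map_of_mem hAX
  have hliftcard : ∀ A : Finset α, A ⊆ X → (lift A).card = A.card := by
    intro A hAX
    conv_rhs => rw [← hliftmap A hAX]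
    rw [Finset.card_map]
  have hliftmem : ∀ (A : Finset α) (z : {x // x ∈ X}), z ∈ lift A ↔ z.1 ∈ A := by
    intro A z
    rw [hlift]
    exact Finset.mem_subtype
  set I : Finset (Finset {x // x ∈ X}) := F.image lift with hI
  set tf : Finset {x // x ∈ X} → Finset {x // x ∈ X} :=
    fun A' => lift (Sf (A'.map (Function.Embedding.subtype _))) with htf
  have hIcard : I.card = F.card := by
    rw [hI]
    apply Finset.card_image_of_injOn
    intro A hA B hB hAB
    rw [← hliftmap A (hBX A hA), ← hliftmap B (hBX B hB), hAB]
  have hSfX : ∀ A ∈ F, Sf A ⊆ X \ A := fun A hA => hSf1 A hA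
  have htfA : ∀ A ∈ F, tf (lift A) = lift (Sf A) := by
    intro A hA
    show lift (Sf ((lift A).map (Function.Embedding.subtype _))) = lift (Sf A)
    rw [hliftmap A (hBX A hA)]
  have hfin : I.card ≤ (r + (k-1)).choose (k-1) := by
    apply bollobas r (k-1) I tf
    · intro A' hA'
      obtain ⟨A, hAF, rfl⟩ := Finset.mem_image.mp hA'
      rw [hliftcard A (hBX A hAF)]
      exact hcard A hAF
    · intro A' hA'
      obtain ⟨A, hAF, rfl⟩ := Finset.mem_image.mp hA'
      rw [htfA A hAF, hliftcard (Sf A) (((hSfX A hAF).trans (Finset.sdiff_subset)))]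
      exact hSf2 A hAF
    · intro A' hA' z hz
      obtain ⟨A, hAF, rfl⟩ := Finset.mem_image.mp hA'
      rw [htfA A hAF, hliftmem]
      rw [hliftmem] at hz
      intro hzS
      have := hSfX A hAF hzS
      rw [Finset.mem_sdiff] at this
      exact this.2 hz
    · intro A' hA' B' hB' hAB
      obtain ⟨A, hAF, rfl⟩ := Finset.mem_image.mp hA'
      obtain ⟨B, hBF, rfl⟩ := Finset.mem_image.mp hB'
      have hABne : A ≠ B := fun h => hAB (by rw [h])
      obtain ⟨x, hx⟩ := hSf3 B hBF A hAF hABne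
      rw [Finset.mem_inter] at hx
      refine ⟨⟨x, hBX A hAF hx.1⟩, ?_, ?_⟩
      · rw [hliftmem]; exact hx.1
      · rw [htfA B hBF, hliftmem]; exact hx.2
  rw [hIcard] at hfin
  have : r + (k - 1) = r + k - 1 := by omega
  rw [this] at hfin
  exact hfin
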